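/- Let k ≥ 1, b > 0, ζ ∈ (0,1), and let X₁,…,X_k be independent Laplace(b) random variables. Then P[∑_{i=1}^k |X_i| ≥ 2kb + 2b·log(1/ζ)] ≤ ζ. (The sum ∑_{i=1}^k |X_i| has the Gamma distribution with shape k and scale b, and the bound follows from the Chernoff tail bound for the Gamma distribution.) -/

import Mathlib

open MeasureTheory
open scoped ENNReal

noncomputable section

/-- The k-fold product of the Laplace(b) distribution on ℝ^k, given by its density. -/
def laplacePi (k : ℕ) (b : ℝ) : Measure (Fin k → ℝ) :=
  volume.withDensity fun x => ENNReal.ofReal (∏ i, (1 / (2 * b)) * Real.exp (-|x i| / b))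

lemma integrable_exp_neg_mul_abs {r : ℝ} (hr : 0 < r) :
    Integrable (fun x : ℝ => Real.exp (-(r * |x|))) := by
  have hIoi : IntegrableOn (fun x : ℝ => Real.exp (-(r * |x|))) (Set.Ioi 0) := by
    refine (exp_neg_integrableOn_Ioi 0 hr).congr_fun (fun x hx => ?_) measurableSet_Ioi
    rw [abs_of_pos hx]
    simp only [neg_mul]
  have hIic : IntegrableOn (fun x : ℝ => Real.exp (-(r * |x|))) (Set.Iic 0) := by
    rw [← Measure.map_neg_eq_self (volume : Measure ℝ)]
    have m : MeasurableEmbedding fun x : ℝ => -x :=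
      (Homeomorph.neg ℝ).measurableEmbedding
    rw [m.integrableOn_map_iff]
    simp_rw [Function.comp_def, abs_neg, Set.neg_preimage, Set.neg_Iic, neg_zero]
    exact Iff.mpr integrableOn_Ici_iff_integrableOn_Ioi hIoi
  have := hIic.union hIoi
  rwa [Set.Iic_union_Ioi, integrableOn_univ] at this

lemma integral_exp_neg_mul_Ioi {r : ℝ} (hr : 0 < r) :
    ∫ x in Set.Ioi (0 : ℝ), Real.exp (-(r * x)) = 1 / r := by
  have := Real.integral_rpow_mul_exp_neg_mul_Ioi (a := 1) one_pos hr
  simpa [sub_self, Real.rpow_zero, Real.Gamma_one] using this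

lemma integral_exp_neg_mul_abs {r : ℝ} (hr : 0 < r) :
    ∫ x : ℝ, Real.exp (-(r * |x|)) = 2 / r := by
  rw [integral_comp_abs (f := fun x => Real.exp (-(r * x))), integral_exp_neg_mul_Ioi hr]
  ring

/-- **Concentration of the ℓ1 norm of a Laplace vector (Lemma 18 of the paper).**
For independent `Laplace(b)` coordinates `X₁,…,X_k` and `ζ ∈ (0,1)`,
`P[∑|X_i| ≥ 2kb + 2b·log(1/ζ)] ≤ ζ`. -/
theorem laplace_l1_concentration
    (k : ℕ) (hk : 1 ≤ k) (b ζ : ℝ) (hb : 0 < b) (hζ : ζ ∈ Set.Ioo (0 : ℝ) 1) :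
    laplacePi k b {x | 2 * (k : ℝ) * b + 2 * b * Real.log (1 / ζ) ≤ ∑ i, |x i|}
      ≤ ENNReal.ofReal ζ := by
  obtain ⟨hζ0, hζ1⟩ := hζ
  set t : ℝ := 2 * (k : ℝ) * b + 2 * b * Real.log (1 / ζ) with ht
  set c : ℝ := Real.exp (-(t / (2 * b))) with hc
  set φ : ℝ → ℝ := fun a => (1 / (2 * b)) * Real.exp (-((1 / (2 * b)) * |a|)) with hφ
  have hb2 : (0 : ℝ) < 2 * b := by linarith
  have hr : (0 : ℝ) < 1 / (2 * b) := by positivity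
  set A : Set (Fin k → ℝ) := {x | t ≤ ∑ i, |x i|} with hA
  have hSmeas : Measurable fun x : Fin k → ℝ => ∑ i, |x i| :=
    Finset.measurable_sum _ fun i _ => (measurable_pi_apply i).abs
  have hAmeas : MeasurableSet A := measurableSet_le measurable_const hSmeas
  -- pointwise key identity
  have key : ∀ x : Fin k → ℝ,
      Real.exp (((∑ i, |x i|) - t) / (2 * b)) * ∏ i, (1 / (2 * b)) * Real.exp (-|x i| / b)
        = c * ∏ i, φ (x i) := by
    intro x
    have e1 : ((∑ i, |x i|) - t) / (2 * b) = -(t / (2 * b)) + ∑ i, |x i| / (2 * b) := by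
      rw [← Finset.sum_div]; ring
    rw [e1, Real.exp_add, Real.exp_sum, hc, mul_assoc]
    congr 1
    rw [← Finset.prod_mul_distrib]
    refine Finset.prod_congr rfl fun i _ => ?_
    rw [hφ, mul_left_comm, ← Real.exp_add]
    congr 2
    field_simp
    ring
  -- the product density is integrable
  have hφint : Integrable φ := (integrable_exp_neg_mul_abs hr).const_mul _
  have hPint : Integrable fun x : Fin k → ℝ => ∏ i, φ (x i) :=
    Integrable.fintype_prod (f := fun _ : Fin k => φ) fun _ => hφint
  have hPnonneg : ∀ x : Fin k → ℝ, 0 ≤ ∏ i, φ (x i) := by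
    intro x
    exact Finset.prod_nonneg fun i _ => by positivity
  have hint : Integrable fun x : Fin k → ℝ => c * ∏ i, φ (x i) := hPint.const_mul c
  -- value of the integral
  have hφval : ∫ a : ℝ, φ a = 2 := by
    rw [hφ, integral_const_mul, integral_exp_neg_mul_abs hr]
    field_simp
  have hPval : ∫ x : Fin k → ℝ, ∏ i, φ (x i) = 2 ^ k := by
    rw [integral_fintype_prod_volume_eq_pow (ι := Fin k) φ, hφval, Fintype.card_fin]
  -- measure bound
  have step1 : laplacePi k b A
      ≤ ∫⁻ x : Fin k → ℝ, ENNReal.ofReal (c * ∏ i, φ (x i)) := by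
    rw [laplacePi, withDensity_apply _ hAmeas]
    have hmono : ∀ x ∈ A, ENNReal.ofReal (∏ i, (1 / (2 * b)) * Real.exp (-|x i| / b))
        ≤ ENNReal.ofReal (c * ∏ i, φ (x i)) := by
      intro x hx
      rw [← key x]
      refine ENNReal.ofReal_le_ofReal ?_
      have h1 : (1 : ℝ) ≤ Real.exp (((∑ i, |x i|) - t) / (2 * b)) := by
        rw [Real.one_le_exp_iff]
        have hxA : t ≤ ∑ i, |x i| := hx
        have : 0 ≤ (∑ i, |x i|) - t := by linarith
        positivity
      have h2 : 0 ≤ ∏ i, (1 / (2 * b)) * Real.exp (-|x i| / b) :=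
        Finset.prod_nonneg fun i _ => by positivity
      nlinarith
    exact le_trans (setLIntegral_mono' hAmeas hmono) (setLIntegral_le_lintegral _ _)
  have step2 : ∫⁻ x : Fin k → ℝ, ENNReal.ofReal (c * ∏ i, φ (x i))
      = ENNReal.ofReal (c * 2 ^ k) := by
    rw [← ofReal_integral_eq_lintegral_ofReal hint]
    · rw [integral_const_mul, hPval]
    · exact Filter.Eventually.of_forall fun x => by
        have := hPnonneg x; positivity
  -- final arithmetic
  have harith : c * 2 ^ k ≤ ζ := by
    have hts : t / (2 * b) = (k : ℝ) + Real.log (1 / ζ) := by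
      rw [ht]; field_simp
    have hcval : c = Real.exp (-(k : ℝ)) * ζ := by
      rw [hc, hts, neg_add, Real.exp_add]
      congr 1
      rw [one_div, Real.log_inv, neg_neg, Real.exp_log hζ0]
    have h2e : (2 : ℝ) ≤ Real.exp 1 := by
      have := Real.exp_one_gt_d9; linarith
    have hpow : (2 : ℝ) ^ k ≤ Real.exp (k : ℝ) := by
      calc (2 : ℝ) ^ k ≤ Real.exp 1 ^ k := pow_le_pow_left₀ (by norm_num) h2e k
        _ = Real.exp (k : ℝ) := by rw [← Real.exp_nat_mul]; ring_nf
    have hek : 0 < Real.exp (-(k : ℝ)) := Real.exp_pos _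
    have : Real.exp (-(k : ℝ)) * (2 : ℝ) ^ k ≤ 1 := by
      have := mul_le_mul_of_nonneg_left hpow hek.le
      rwa [← Real.exp_add, neg_add_cancel, Real.exp_zero] at this
    calc c * 2 ^ k = ζ * (Real.exp (-(k : ℝ)) * 2 ^ k) := by rw [hcval]; ring
      _ ≤ ζ * 1 := by exact mul_le_mul_of_nonneg_left this hζ0.le
      _ = ζ := mul_one ζ
  calc laplacePi k b A ≤ ENNReal.ofReal (c * 2 ^ k) := step2 ▸ step1
    _ ≤ ENNReal.ofReal ζ := ENNReal.ofReal_le_ofReal harith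

end
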